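/- Let m ≥ 2 and let η = (η_1, …, η_m) ∈ (ℝ²)^m be such that M := max_i |η_i| > ρ. Then for every index i with |η_i| = M, the inner product ⟨η_i, −f̄(η_i) + Σ_{j≠i} γ̄_ij(η_j − η_i)⟩ ≤ −κ(M)·M, and this quantity is strictly negative. -/

import Mathlib

open Real Set Filter MeasureTheory
open scoped RealInnerProductSpace

noncomputable section

/-- The plane `ℝ²` with the Euclidean norm. -/
abbrev E2 : Type := EuclideanSpace ℝ (Fin 2)

/-- The vector `(a, b) ∈ ℝ²`. -/
def vec2 (a b : ℝ) : E2 := !₂[a, b]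

/-- `κ(s) = (2/π) ∫₀ˢ f(σ) √(1 - σ²/s²) dσ` (equal to `0` at `s = 0`). -/
def kappa (f : ℝ → ℝ) (s : ℝ) : ℝ :=
  (2 / π) * ∫ σ in (0:ℝ)..s, f σ * Real.sqrt (1 - σ ^ 2 / s ^ 2)

/-- The average function `f̄` of `f`. -/
def fbar (f : ℝ → ℝ) (v : E2) : E2 :=
  (1 / (2 * π)) • ∫ φ in (0:ℝ)..(2 * π),
    (f (v 0 * Real.cos φ + v 1 * Real.sin φ) * (-(v 0) * Real.sin φ + v 1 * Real.cos φ)) •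
      vec2 (-Real.sin φ) (Real.cos φ)

/-- The average function `γ̄` of a coupling function `γ`. -/
def gbar (γ : ℝ → ℝ) (v : E2) : E2 :=
  (1 / (2 * π)) • ∫ φ in (0:ℝ)..(2 * π),
    γ (-(v 0) * Real.sin φ + v 1 * Real.cos φ) • vec2 (-Real.sin φ) (Real.cos φ)

/-- `ρ̄(s) = (1/2π) ∫₀^{2π} γ(s sin φ) sin φ dφ`. -/
def rhobar (γ : ℝ → ℝ) (s : ℝ) : ℝ :=
  (1 / (2 * π)) * ∫ φ in (0:ℝ)..(2 * π), γ (s * Real.sin φ) * Real.sin φ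

/-- A class-K function: continuous on `[0, ∞)`, zero at zero, strictly increasing on `[0, ∞)`. -/
def ClassK (α : ℝ → ℝ) : Prop :=
  ContinuousOn α (Set.Ici 0) ∧ α 0 = 0 ∧ StrictMonoOn α (Set.Ici 0)

/-- Condition (L2) for a function `F` with crossing point `s₀ > 0`: `F(s₀) = 0`,
`F` negative on `(0, s₀)`, and `F` positive, nondecreasing and unbounded on `(s₀, ∞)`. -/
def CondL2 (F : ℝ → ℝ) (s₀ : ℝ) : Prop :=
  0 < s₀ ∧ F s₀ = 0 ∧ (∀ s ∈ Set.Ioo (0:ℝ) s₀, F s < 0) ∧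
    (∀ s ∈ Set.Ioi s₀, 0 < F s) ∧ MonotoneOn F (Set.Ioi s₀) ∧
    Filter.Tendsto F Filter.atTop Filter.atTop

/-- The state space `(ℝ²)^m` with the Euclidean norm of `ℝ^{2m}`. -/
abbrev St (m : ℕ) : Type := PiLp 2 (fun _ : Fin m => E2)



lemma inner_vec2 (u : E2) (a b : ℝ) : ⟪u, vec2 a b⟫ = u 0 * a + u 1 * b := by
  simp [vec2, PiLp.inner_apply, RCLike.inner_apply, Fin.sum_univ_two]; ring

lemma vec2_smul_decomp (k a b : ℝ) :
    k • vec2 a b = (k * a) • vec2 1 0 + (k * b) • vec2 0 1 := by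
  ext i
  fin_cases i <;> simp [vec2] <;> ring

example (u : E2) : ‖u‖^2 = (u 0)^2 + (u 1)^2 := by
  rw [EuclideanSpace.norm_sq_eq]; simp [Fin.sum_univ_two]

lemma inner_integral_vec2 (u : E2) (k : ℝ → ℝ) (hk : Continuous k) (a b : ℝ) :
    ⟪u, ∫ φ in a..b, k φ • vec2 (-Real.sin φ) (Real.cos φ)⟫ =
      ∫ φ in a..b, k φ * (-(u 0) * Real.sin φ + u 1 * Real.cos φ) := by
  have h1 : (∫ φ in a..b, k φ • vec2 (-Real.sin φ) (Real.cos φ)) =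
      (∫ φ in a..b, k φ * (-Real.sin φ)) • vec2 1 0 +
      (∫ φ in a..b, k φ * Real.cos φ) • vec2 0 1 := by
    rw [← intervalIntegral.integral_smul_const, ← intervalIntegral.integral_smul_const,
      ← intervalIntegral.integral_add]
    · exact intervalIntegral.integral_congr (fun φ _ => vec2_smul_decomp _ _ _)
    · exact ((hk.mul continuous_sin.neg).smul continuous_const).intervalIntegrable a b
    · exact ((hk.mul continuous_cos).smul continuous_const).intervalIntegrable a b
  rw [h1, inner_add_right, real_inner_smul_right, real_inner_smul_right, inner_vec2, inner_vec2]
  simp only [mul_one, mul_zero, add_zero, zero_add]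
  rw [← intervalIntegral.integral_mul_const, ← intervalIntegral.integral_mul_const,
    ← intervalIntegral.integral_add
      ((by fun_prop : Continuous fun x => k x * -Real.sin x * u 0).intervalIntegrable a b)
      ((by fun_prop : Continuous fun x => k x * Real.cos x * u 1).intervalIntegrable a b)]
  exact intervalIntegral.integral_congr (fun φ _ => by ring)

lemma inner_coords (u w : E2) : ⟪u, w⟫ = u 0 * w 0 + u 1 * w 1 := by
  simp [PiLp.inner_apply, RCLike.inner_apply, Fin.sum_univ_two]; ring

lemma norm_sq_coords (u : E2) : ‖u‖ ^ 2 = u 0 ^ 2 + u 1 ^ 2 := by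
  rw [← real_inner_self_eq_norm_sq, inner_coords]; ring

lemma hasDerivAt_primitive {f : ℝ → ℝ} (hf : Continuous f) (t : ℝ) :
    HasDerivAt (fun s => ∫ σ in (0:ℝ)..s, f σ) (f t) t :=
  intervalIntegral.integral_hasDerivAt_right (hf.intervalIntegrable _ _)
    (hf.stronglyMeasurable.stronglyMeasurableAtFilter) hf.continuousAt

lemma integral_gamma_deriv_eq_zero {γ : ℝ → ℝ} (hγ : Continuous γ) (hγ0 : γ 0 = 0) (w : E2) :
    ∫ φ in (0:ℝ)..(2*π), γ (-(w 0) * Real.sin φ + w 1 * Real.cos φ) *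
      (w 0 * Real.cos φ + w 1 * Real.sin φ) = 0 := by
  set Γ : ℝ → ℝ := fun t => ∫ σ in (0:ℝ)..t, γ σ with hΓ
  set g : ℝ → ℝ := fun φ => -(w 0) * Real.sin φ + w 1 * Real.cos φ with hg
  have hgd : ∀ φ : ℝ, HasDerivAt g (-(w 0 * Real.cos φ + w 1 * Real.sin φ)) φ := by
    intro φ
    have h1 := ((Real.hasDerivAt_sin φ).const_mul (-(w 0))).add
      ((Real.hasDerivAt_cos φ).const_mul (w 1))
    exact h1.congr_deriv (by ring)
  have hG : ∀ φ : ℝ, HasDerivAt (fun φ => Γ (g φ))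
      (-(γ (g φ) * (w 0 * Real.cos φ + w 1 * Real.sin φ))) φ := by
    intro φ
    have := (hasDerivAt_primitive hγ (g φ)).comp φ (hgd φ)
    exact this.congr_deriv (by ring)
  have hcont : Continuous fun φ => -(γ (g φ) * (w 0 * Real.cos φ + w 1 * Real.sin φ)) := by
    fun_prop
  have key := intervalIntegral.integral_eq_sub_of_hasDerivAt (a := (0:ℝ)) (b := 2*π)
    (f := fun φ => Γ (g φ)) (fun x _ => hG x) (hcont.intervalIntegrable _ _)
  have hper : g (2*π) = g 0 := by simp [hg]
  simp only [hper, sub_self] at key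
  rw [intervalIntegral.integral_neg] at key
  have : (∫ φ in (0:ℝ)..(2*π), γ (g φ) * (w 0 * Real.cos φ + w 1 * Real.sin φ)) = 0 := by
    linarith [key]
  exact this



lemma inner_gbar (u w : E2) {γ : ℝ → ℝ} (hγ : Continuous γ) :
    ⟪u, gbar γ w⟫ = (1 / (2 * π)) * ∫ φ in (0:ℝ)..(2*π),
      γ (-(w 0) * Real.sin φ + w 1 * Real.cos φ) * (-(u 0) * Real.sin φ + u 1 * Real.cos φ) := by
  rw [gbar, real_inner_smul_right,
    inner_integral_vec2 u (fun φ => γ (-(w 0) * Real.sin φ + w 1 * Real.cos φ))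
      (by fun_prop)]

lemma inner_gbar_nonpos (u w : E2) {γ : ℝ → ℝ} (hγ : Continuous γ) (hγ0 : γ 0 = 0)
    (hsign : ∀ s : ℝ, 0 ≤ s * γ s) (hin : ⟪u, w⟫ ≤ 0) : ⟪u, gbar γ w⟫ ≤ 0 := by
  rw [inner_gbar u w hγ]
  rcases eq_or_ne w 0 with rfl | hw
  · simp [hγ0]
  · have hw2 : (0:ℝ) < w 0 ^ 2 + w 1 ^ 2 := by
      rcases lt_or_eq_of_le (norm_nonneg w) with h | h
      · have := norm_sq_coords w; nlinarith
      · exact absurd (norm_eq_zero.mp h.symm) hw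
    set r2 := w 0 ^ 2 + w 1 ^ 2 with hr2
    set c := (u 0 * w 0 + u 1 * w 1) / r2 with hc
    set lam := (-(u 0) * w 1 + u 1 * w 0) / r2 with hlam
    have hdec : ∀ φ : ℝ, -(u 0) * Real.sin φ + u 1 * Real.cos φ =
        c * (-(w 0) * Real.sin φ + w 1 * Real.cos φ) + lam * (w 0 * Real.cos φ + w 1 * Real.sin φ) := by
      intro φ; rw [hc, hlam]; field_simp; ring
    have hI : (∫ φ in (0:ℝ)..(2*π),
        γ (-(w 0) * Real.sin φ + w 1 * Real.cos φ) * (-(u 0) * Real.sin φ + u 1 * Real.cos φ)) =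
        c * ∫ φ in (0:ℝ)..(2*π),
          γ (-(w 0) * Real.sin φ + w 1 * Real.cos φ) * (-(w 0) * Real.sin φ + w 1 * Real.cos φ) := by
      have hcg : Continuous fun φ => γ (-(w 0) * Real.sin φ + w 1 * Real.cos φ) := by fun_prop
      rw [← intervalIntegral.integral_const_mul]
      have hsplit : ∀ φ : ℝ, γ (-(w 0) * Real.sin φ + w 1 * Real.cos φ) *
          (-(u 0) * Real.sin φ + u 1 * Real.cos φ) =
          c * (γ (-(w 0) * Real.sin φ + w 1 * Real.cos φ) * (-(w 0) * Real.sin φ + w 1 * Real.cos φ)) +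
          lam * (γ (-(w 0) * Real.sin φ + w 1 * Real.cos φ) * (w 0 * Real.cos φ + w 1 * Real.sin φ)) := by
        intro φ; rw [hdec φ]; ring
      rw [intervalIntegral.integral_congr (fun φ _ => hsplit φ),
        intervalIntegral.integral_add
          (((by fun_prop : Continuous fun φ => c *
            (γ (-(w 0) * Real.sin φ + w 1 * Real.cos φ) *
              (-(w 0) * Real.sin φ + w 1 * Real.cos φ)))).intervalIntegrable 0 (2*π))
          (((by fun_prop : Continuous fun φ => lam *
            (γ (-(w 0) * Real.sin φ + w 1 * Real.cos φ) *
              (w 0 * Real.cos φ + w 1 * Real.sin φ)))).intervalIntegrable 0 (2*π)),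
        intervalIntegral.integral_const_mul lam, integral_gamma_deriv_eq_zero hγ hγ0 w]
      ring
    rw [hI]
    have hJ : 0 ≤ ∫ φ in (0:ℝ)..(2*π),
        γ (-(w 0) * Real.sin φ + w 1 * Real.cos φ) * (-(w 0) * Real.sin φ + w 1 * Real.cos φ) := by
      apply intervalIntegral.integral_nonneg (by positivity)
      intro φ _
      have := hsign (-(w 0) * Real.sin φ + w 1 * Real.cos φ)
      linarith
    have hcle : c ≤ 0 := by
      rw [inner_coords] at hin
      exact div_nonpos_of_nonpos_of_nonneg hin hw2.le
    have : c * (∫ φ in (0:ℝ)..(2*π),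
        γ (-(w 0) * Real.sin φ + w 1 * Real.cos φ) * (-(w 0) * Real.sin φ + w 1 * Real.cos φ)) ≤ 0 :=
      mul_nonpos_of_nonpos_of_nonneg hcle hJ
    have h2π : (0:ℝ) < 1 / (2*π) := by positivity
    nlinarith


lemma polar (v : E2) (hv : v ≠ 0) :
    ∃ θ : ℝ, v 0 = ‖v‖ * Real.cos θ ∧ v 1 = ‖v‖ * Real.sin θ := by
  set z : ℂ := ⟨v 0, v 1⟩ with hz
  have hz0 : z ≠ 0 := by
    intro h
    apply hv
    have h0 : v 0 = 0 := by simpa using congrArg Complex.re h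
    have h1 : v 1 = 0 := by simpa using congrArg Complex.im h
    ext i; fin_cases i <;> simpa
  have habs : ‖z‖ = ‖v‖ := by
    have : ‖v‖ ^ 2 = v 0 ^ 2 + v 1 ^ 2 := by
      rw [EuclideanSpace.norm_sq_eq]; simp [Fin.sum_univ_two]
    rw [Complex.norm_def, Complex.normSq_mk]
    rw [show v 0 * v 0 + v 1 * v 1 = ‖v‖ ^ 2 by rw [this]; ring]
    exact Real.sqrt_sq (norm_nonneg v)
  refine ⟨Complex.arg z, ?_, ?_⟩
  · have := Complex.cos_arg hz0
    rw [habs] at this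
    have hn : ‖v‖ ≠ 0 := by simpa using hv
    field_simp [hz] at this ⊢
    simpa [mul_comm] using this.symm
  · have := Complex.sin_arg z
    rw [habs] at this
    have hn : ‖v‖ ≠ 0 := by simpa using hv
    field_simp [hz] at this ⊢
    simpa [mul_comm] using this.symm

section Psi
variable (f : ℝ → ℝ) (r : ℝ)

/-- the profile function -/
def Psi : ℝ → ℝ := fun ψ => f (r * Real.cos ψ) * (r * Real.sin ψ) ^ 2

lemma Psi_periodic : Function.Periodic (Psi f r) (2 * π) := by
  intro ψ; simp [Psi, Real.cos_add_two_pi, Real.sin_add_two_pi]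

variable {f r}

lemma Psi_cont (hf : Continuous f) : Continuous (Psi f r) := by
  unfold Psi; fun_prop

lemma step_half (hf : Continuous f) (hfe : ∀ s, f (-s) = f s) :
    ∫ ψ in (0:ℝ)..(2*π), Psi f r ψ = 2 * ∫ ψ in (0:ℝ)..π, Psi f r ψ := by
  have h1 : (∫ ψ in (0:ℝ)..π, Psi f r ψ) + (∫ ψ in π..(2*π), Psi f r ψ)
      = ∫ ψ in (0:ℝ)..(2*π), Psi f r ψ :=
    intervalIntegral.integral_add_adjacent_intervals
      ((Psi_cont hf).intervalIntegrable _ _) ((Psi_cont hf).intervalIntegrable _ _)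
  have h2 : (∫ ψ in π..(2*π), Psi f r ψ) = ∫ ψ in (0:ℝ)..π, Psi f r ψ := by
    have := intervalIntegral.integral_comp_add_right (a := (0:ℝ)) (b := π) (Psi f r) π
    rw [zero_add, show π + π = 2*π by ring] at this
    rw [← this]
    refine intervalIntegral.integral_congr fun ψ _ => ?_
    simp only [Psi, Real.cos_add, Real.sin_add, Real.cos_pi, Real.sin_pi]
    rw [show r * (Real.cos ψ * (-1) - Real.sin ψ * 0) = -(r * Real.cos ψ) by ring, hfe]
    ring
  linarith

lemma step_subst (hf : Continuous f) (hr : 0 < r) :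
    ∫ ψ in (0:ℝ)..π, Psi f r ψ =
      ∫ u in (-r)..r, f u * (Real.sqrt (1 - u ^ 2 / r ^ 2) * r) := by
  have key := intervalIntegral.integral_comp_smul_deriv (a := (0:ℝ)) (b := π)
    (f := fun ψ => r * Real.cos ψ) (f' := fun ψ => -(r * Real.sin ψ))
    (g := fun u => f u * (Real.sqrt (1 - u ^ 2 / r ^ 2) * r))
    (fun ψ _ => by simpa using ((Real.hasDerivAt_cos ψ).const_mul r))
    (by fun_prop) (by fun_prop)
  simp only [Real.cos_zero, mul_one, Real.cos_pi, mul_neg_one] at key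
  have hcong : ∀ ψ ∈ uIcc (0:ℝ) π, Psi f r ψ =
      -((fun ψ => -(r * Real.sin ψ)) ψ •
        ((fun u => f u * (Real.sqrt (1 - u ^ 2 / r ^ 2) * r)) ∘ (fun ψ => r * Real.cos ψ)) ψ) := by
    intro ψ hψ
    rw [uIcc_of_le Real.pi_pos.le] at hψ
    have hs : Real.sqrt (1 - (r * Real.cos ψ) ^ 2 / r ^ 2) = Real.sin ψ := by
      rw [show 1 - (r * Real.cos ψ) ^ 2 / r ^ 2 = Real.sin ψ ^ 2 by
        field_simp; nlinarith [Real.sin_sq_add_cos_sq ψ]]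
      exact Real.sqrt_sq (Real.sin_nonneg_of_nonneg_of_le_pi hψ.1 hψ.2)
    simp only [Function.comp, smul_eq_mul, Psi, hs]
    ring
  rw [intervalIntegral.integral_congr hcong, intervalIntegral.integral_neg, key,
    intervalIntegral.integral_symm, neg_neg]

lemma step_even (hf : Continuous f) (hfe : ∀ s, f (-s) = f s) :
    (∫ u in (-r)..r, f u * (Real.sqrt (1 - u ^ 2 / r ^ 2) * r)) =
      2 * ∫ u in (0:ℝ)..r, f u * (Real.sqrt (1 - u ^ 2 / r ^ 2) * r) := by
  have h1 : (∫ u in (-r)..(0:ℝ), f u * (Real.sqrt (1 - u ^ 2 / r ^ 2) * r)) +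
      (∫ u in (0:ℝ)..r, f u * (Real.sqrt (1 - u ^ 2 / r ^ 2) * r)) =
      ∫ u in (-r)..r, f u * (Real.sqrt (1 - u ^ 2 / r ^ 2) * r) :=
    intervalIntegral.integral_add_adjacent_intervals
      ((by fun_prop : Continuous fun u => f u * (Real.sqrt (1 - u ^ 2 / r ^ 2) * r)).intervalIntegrable _ _)
      ((by fun_prop : Continuous fun u => f u * (Real.sqrt (1 - u ^ 2 / r ^ 2) * r)).intervalIntegrable _ _)
  have h2 : (∫ u in (-r)..(0:ℝ), f u * (Real.sqrt (1 - u ^ 2 / r ^ 2) * r)) =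
      ∫ u in (0:ℝ)..r, f u * (Real.sqrt (1 - u ^ 2 / r ^ 2) * r) := by
    have := intervalIntegral.integral_comp_neg (a := (0:ℝ)) (b := r)
      (fun u => f u * (Real.sqrt (1 - u ^ 2 / r ^ 2) * r))
    rw [neg_zero] at this
    rw [← this]
    refine intervalIntegral.integral_congr fun u _ => ?_
    rw [show (-u)^2 = u^2 by ring, hfe]
  linarith

end Psi

lemma step_shift {f : ℝ → ℝ} {r : ℝ} (hf : Continuous f) (θ : ℝ) :
    ∫ φ in (0:ℝ)..(2*π), Psi f r (φ - θ) = ∫ ψ in (0:ℝ)..(2*π), Psi f r ψ := by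
  rw [intervalIntegral.integral_comp_sub_right (Psi f r) θ]
  have := (Psi_periodic f r).intervalIntegral_add_eq (0 - θ) 0
  rw [zero_add] at this
  rw [show (2*π - θ) = 0 - θ + 2*π by ring, this]




lemma primitive_continuous {f : ℝ → ℝ} (hf : Continuous f) :
    Continuous (fun s => ∫ σ in (0:ℝ)..s, f σ) := by
  have : Differentiable ℝ (fun s => ∫ σ in (0:ℝ)..s, f σ) :=
    fun t => (hasDerivAt_primitive hf t).differentiableAt
  exact this.continuous

/-- `κ(s) = (2/π) ∫₀^{π/2} F(s sin θ) sin θ dθ` for `s > 0`. -/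
lemma kappa_eq_G {f : ℝ → ℝ} (hf : Continuous f) {s : ℝ} (hs : 0 < s) :
    kappa f s = (2 / π) * ∫ θ in (0:ℝ)..(π/2),
      (∫ σ in (0:ℝ)..(s * Real.sin θ), f σ) * Real.sin θ := by
  set F : ℝ → ℝ := fun t => ∫ σ in (0:ℝ)..t, f σ with hF
  -- substitution σ = s sin θ
  have key := intervalIntegral.integral_comp_smul_deriv (a := (0:ℝ)) (b := π/2)
    (f := fun θ => s * Real.sin θ) (f' := fun θ => s * Real.cos θ)
    (g := fun u => f u * Real.sqrt (1 - u ^ 2 / s ^ 2))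
    (fun θ _ => (Real.hasDerivAt_sin θ).const_mul s)
    (by fun_prop) (by fun_prop)
  simp only [Real.sin_zero, mul_zero, Real.sin_pi_div_two, mul_one] at key
  -- rewrite the LHS of key on [0, π/2]
  have hπ2 : (0:ℝ) ≤ π/2 := by positivity
  have hcong : ∀ θ ∈ uIcc (0:ℝ) (π/2),
      (s * Real.cos θ) • ((fun u => f u * Real.sqrt (1 - u ^ 2 / s ^ 2)) ∘
        (fun θ => s * Real.sin θ)) θ = (f (s * Real.sin θ) * (s * Real.cos θ)) * Real.cos θ := by
    intro θ hθ
    rw [uIcc_of_le hπ2] at hθ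
    have hcos : 0 ≤ Real.cos θ := Real.cos_nonneg_of_mem_Icc
      ⟨by linarith [hθ.1, Real.pi_pos], hθ.2⟩
    have hs' : Real.sqrt (1 - (s * Real.sin θ) ^ 2 / s ^ 2) = Real.cos θ := by
      rw [show 1 - (s * Real.sin θ) ^ 2 / s ^ 2 = Real.cos θ ^ 2 by
        field_simp; nlinarith [Real.sin_sq_add_cos_sq θ]]
      exact Real.sqrt_sq hcos
    simp only [Function.comp, smul_eq_mul, hs']
    ring
  rw [kappa, ← key, intervalIntegral.integral_congr hcong]
  -- integration by parts
  have hU : ∀ θ : ℝ, HasDerivAt (fun θ => F (s * Real.sin θ)) (f (s * Real.sin θ) * (s * Real.cos θ)) θ := by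
    intro θ
    have := (hasDerivAt_primitive hf (s * Real.sin θ)).comp θ
      ((Real.hasDerivAt_sin θ).const_mul s)
    exact this
  have parts := intervalIntegral.integral_mul_deriv_eq_deriv_mul (a := (0:ℝ)) (b := π/2)
    (u := fun θ => Real.cos θ) (u' := fun θ => -Real.sin θ)
    (v := fun θ => F (s * Real.sin θ)) (v' := fun θ => f (s * Real.sin θ) * (s * Real.cos θ))
    (fun θ _ => Real.hasDerivAt_cos θ) (fun θ _ => hU θ)
    ((by fun_prop : Continuous fun θ => -Real.sin θ).intervalIntegrable _ _)
    ((by fun_prop : Continuous fun θ => f (s * Real.sin θ) * (s * Real.cos θ)).intervalIntegrable _ _)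
  have hF0 : F 0 = 0 := intervalIntegral.integral_same
  simp only [Real.cos_pi_div_two, Real.cos_zero, Real.sin_zero, mul_zero, hF0,
    zero_mul, one_mul, zero_sub] at parts
  -- parts : ∫ cos θ * (f(s sin θ)*(s cos θ)) = -0 - ∫ (-sin θ) * F(s sin θ)
  have e1 : (∫ θ in (0:ℝ)..(π/2), f (s * Real.sin θ) * (s * Real.cos θ) * Real.cos θ)
      = ∫ θ in (0:ℝ)..(π/2), Real.cos θ * (f (s * Real.sin θ) * (s * Real.cos θ)) :=
    intervalIntegral.integral_congr fun θ _ => by ring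
  have e2 : (∫ θ in (0:ℝ)..(π/2), -Real.sin θ * F (s * Real.sin θ))
      = -∫ θ in (0:ℝ)..(π/2), F (s * Real.sin θ) * Real.sin θ := by
    rw [← intervalIntegral.integral_neg]
    exact intervalIntegral.integral_congr fun θ _ => by ring
  rw [e1, parts, e2]
  have e4 : (∫ θ in (0:ℝ)..(π/2), F (s * Real.sin θ) * Real.sin θ)
      = ∫ θ in (0:ℝ)..(π/2), Real.sin θ * F (s * Real.sin θ) :=
    intervalIntegral.integral_congr fun θ _ => by ring
  rw [e4]
  simp only [hF]
  ring

section Glem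
variable {F : ℝ → ℝ}

/-- G is negative on (0, s₀]. -/
lemma G_neg (hFc : Continuous F) {s₀ : ℝ} (hs₀ : 0 < s₀)
    (hneg : ∀ s ∈ Set.Ioo (0:ℝ) s₀, F s < 0) (hFs₀ : F s₀ = 0)
    {s : ℝ} (hs : 0 < s) (hss₀ : s ≤ s₀) :
    (∫ θ in (0:ℝ)..(π/2), F (s * Real.sin θ) * Real.sin θ) < 0 := by
  have h2 : (0:ℝ) < π/2 := by positivity
  have key : 0 < ∫ θ in (0:ℝ)..(π/2), -(F (s * Real.sin θ) * Real.sin θ) := by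
    apply intervalIntegral.integral_pos h2
    · exact ((hFc.comp (by fun_prop)).mul Real.continuous_sin).neg.continuousOn
    · intro θ hθ
      have hsin : 0 < Real.sin θ := Real.sin_pos_of_pos_of_lt_pi hθ.1
        (lt_of_le_of_lt hθ.2 (by linarith [Real.pi_pos]))
      have hsin1 : Real.sin θ ≤ 1 := Real.sin_le_one θ
      have harg : s * Real.sin θ ∈ Set.Ioc (0:ℝ) s₀ :=
        ⟨by positivity, by nlinarith⟩
      rcases eq_or_lt_of_le harg.2 with h | h
      · rw [h, hFs₀]; simp
      · have := hneg _ ⟨harg.1, h⟩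
        nlinarith
    · refine ⟨π/4, ⟨by positivity, by linarith [Real.pi_pos]⟩, ?_⟩
      have hsin : Real.sin (π/4) = Real.sqrt 2 / 2 := Real.sin_pi_div_four
      have h02 : (0:ℝ) < Real.sqrt 2 / 2 := by positivity
      have hlt : Real.sqrt 2 / 2 < 1 := by
        nlinarith [Real.sq_sqrt (by norm_num : (2:ℝ) ≥ 0), Real.sqrt_nonneg 2]
      have harg : s * Real.sin (π/4) ∈ Set.Ioo (0:ℝ) s₀ := by
        rw [hsin]; constructor
        · positivity
        · nlinarith
      have := hneg _ harg
      rw [hsin] at this ⊢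
      nlinarith
  rw [intervalIntegral.integral_neg] at key
  linarith

/-- substitution u = s sin θ on the inner part. -/
lemma N_subst (hFc : Continuous F) {s₀ s : ℝ} (hs₀ : 0 < s₀) (hs : s₀ < s) :
    (∫ θ in (0:ℝ)..(Real.arcsin (s₀/s)), F (s * Real.sin θ) * Real.sin θ) =
      ∫ u in (0:ℝ)..s₀, F u * (u / (s * Real.sqrt (s^2 - u^2))) := by
  have hspos : 0 < s := hs₀.trans hs
  have hr1 : 0 < s₀/s := by positivity
  have hr2 : s₀/s < 1 := (div_lt_one hspos).mpr hs
  set θs := Real.arcsin (s₀/s) with hθs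
  have hθs_pos : 0 < θs := Real.arcsin_pos.mpr hr1
  have hθs_lt : θs < π/2 := Real.arcsin_lt_pi_div_two.mpr hr2
  have hsinθs : Real.sin θs = s₀/s := Real.sin_arcsin (by linarith : (-1:ℝ) ≤ s₀/s) hr2.le
  have hg : ∀ θ ∈ uIcc (0:ℝ) θs, HasDerivAt (fun θ => s * Real.sin θ) (s * Real.cos θ) θ :=
    fun θ _ => (Real.hasDerivAt_sin θ).const_mul s
  have himg : (fun θ => s * Real.sin θ) '' (uIcc (0:ℝ) θs) ⊆ Set.Icc 0 s₀ := by
    rintro _ ⟨θ, hθ, rfl⟩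
    rw [uIcc_of_le hθs_pos.le] at hθ
    have h1 : 0 ≤ Real.sin θ := Real.sin_nonneg_of_nonneg_of_le_pi hθ.1
      (by linarith [Real.pi_pos, hθ.2, hθs_lt])
    have h2 : Real.sin θ ≤ Real.sin θs := by
      apply Real.strictMonoOn_sin.monotoneOn
        ⟨by linarith [Real.pi_pos, hθ.1], by linarith [hθ.2, hθs_lt]⟩
        ⟨by linarith [Real.pi_pos, hθs_pos], hθs_lt.le⟩ hθ.2
    constructor
    · positivity
    · calc s * Real.sin θ ≤ s * Real.sin θs := by nlinarith
        _ = s₀ := by rw [hsinθs]; field_simp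
  have hgcont : ContinuousOn (fun u => F u * (u / (s * Real.sqrt (s^2 - u^2))))
      ((fun θ => s * Real.sin θ) '' (uIcc (0:ℝ) θs)) := by
    apply ContinuousOn.mono _ himg
    apply ContinuousOn.mul hFc.continuousOn
    apply ContinuousOn.div continuousOn_id
    · exact (continuous_const.mul ((continuous_const.sub (continuous_pow 2)).sqrt)).continuousOn
    · intro u hu
      have h1 : u < s := lt_of_le_of_lt hu.2 hs
      have h2 : 0 < s^2 - u^2 := by nlinarith [hu.1]
      have := Real.sqrt_pos.mpr h2
      positivity
  have key := intervalIntegral.integral_comp_smul_deriv' (a := (0:ℝ)) (b := θs)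
    (f := fun θ => s * Real.sin θ) (f' := fun θ => s * Real.cos θ)
    (g := fun u => F u * (u / (s * Real.sqrt (s^2 - u^2)))) hg (by fun_prop) hgcont
  simp only [Real.sin_zero, mul_zero] at key
  have hend : s * Real.sin θs = s₀ := by rw [hsinθs]; field_simp
  rw [hend] at key
  rw [← key]
  refine intervalIntegral.integral_congr fun θ hθ => ?_
  rw [uIcc_of_le hθs_pos.le] at hθ
  have hcos : 0 < Real.cos θ := Real.cos_pos_of_mem_Ioo
    ⟨by linarith [Real.pi_pos, hθ.1], by linarith [hθ.2, hθs_lt]⟩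
  have hsq : Real.sqrt (s^2 - (s * Real.sin θ)^2) = s * Real.cos θ := by
    rw [show s^2 - (s * Real.sin θ)^2 = (s * Real.cos θ)^2 by
      nlinarith [Real.sin_sq_add_cos_sq θ]]
    exact Real.sqrt_sq (by positivity)
  simp only [Function.comp, smul_eq_mul, hsq]
  field_simp
end Glem

set_option maxHeartbeats 1000000 in
lemma kappa_pos_of_gt {f F : ℝ → ℝ} (hf : Continuous f)
    (hFf : ∀ t, F t = ∫ σ in (0:ℝ)..t, f σ) {s₀ ρ M : ℝ}
    (hs₀ : 0 < s₀)
    (hFs₀ : F s₀ = 0)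
    (hneg : ∀ s ∈ Set.Ioo (0:ℝ) s₀, F s < 0)
    (hpos : ∀ s ∈ Set.Ioi s₀, 0 < F s)
    (hmono : MonotoneOn F (Set.Ioi s₀))
    (hρ : 0 < ρ) (hκρ : kappa f ρ = 0) (hMρ : ρ < M) :
    0 < kappa f M := by
  have hFc : Continuous F := by
    rw [show F = (fun t => ∫ σ in (0:ℝ)..t, f σ) from funext hFf]
    exact primitive_continuous hf
  have hkapG : ∀ s : ℝ, 0 < s → kappa f s =
      (2/π) * ∫ θ in (0:ℝ)..(π/2), F (s * Real.sin θ) * Real.sin θ := by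
    intro s hs
    rw [kappa_eq_G hf hs]
    congr 1
    exact intervalIntegral.integral_congr fun θ _ => by rw [hFf]
  have hM : 0 < M := hρ.trans hMρ
  have h2π : (0:ℝ) < 2/π := by positivity
  -- G ρ = 0
  have hGρ : (∫ θ in (0:ℝ)..(π/2), F (ρ * Real.sin θ) * Real.sin θ) = 0 := by
    have h := (hkapG ρ hρ).symm.trans hκρ
    rcases mul_eq_zero.mp h with h' | h'
    · exact absurd h' (ne_of_gt h2π)
    · exact h'
  -- ρ > s₀
  have hρs₀ : s₀ < ρ := by
    by_contra h
    push_neg at h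
    have := G_neg hFc hs₀ hneg hFs₀ hρ h
    rw [hGρ] at this
    exact lt_irrefl 0 this
  have hMs₀ : s₀ < M := hρs₀.trans hMρ
  -- angles
  set θ₁ := Real.arcsin (s₀/ρ) with hθ₁def
  set θ₂ := Real.arcsin (s₀/M) with hθ₂def
  have hr1ρ : 0 < s₀/ρ := by positivity
  have hr2ρ : s₀/ρ < 1 := (div_lt_one hρ).mpr hρs₀
  have hr1M : 0 < s₀/M := by positivity
  have hr2M : s₀/M < 1 := (div_lt_one hM).mpr hMs₀
  have hθ₁pos : 0 < θ₁ := Real.arcsin_pos.mpr hr1ρ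
  have hθ₂pos : 0 < θ₂ := Real.arcsin_pos.mpr hr1M
  have hθ₁lt : θ₁ < π/2 := Real.arcsin_lt_pi_div_two.mpr hr2ρ
  have hθ₂lt : θ₂ < π/2 := Real.arcsin_lt_pi_div_two.mpr hr2M
  have hθ₂₁ : θ₂ ≤ θ₁ := Real.monotone_arcsin
    (div_le_div_of_nonneg_left hs₀.le hρ hMρ.le)
  have hsinθ₁ : Real.sin θ₁ = s₀/ρ := Real.sin_arcsin (by linarith) hr2ρ.le
  have hsinθ₂ : Real.sin θ₂ = s₀/M := Real.sin_arcsin (by linarith) hr2M.le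
  have hcι : ∀ s : ℝ, Continuous fun θ => F (s * Real.sin θ) * Real.sin θ := by
    intro s; fun_prop
  -- splits
  have hsplitρ : (∫ θ in (0:ℝ)..θ₁, F (ρ * Real.sin θ) * Real.sin θ) +
      (∫ θ in θ₁..(π/2), F (ρ * Real.sin θ) * Real.sin θ) =
      ∫ θ in (0:ℝ)..(π/2), F (ρ * Real.sin θ) * Real.sin θ :=
    intervalIntegral.integral_add_adjacent_intervals
      ((hcι ρ).intervalIntegrable _ _) ((hcι ρ).intervalIntegrable _ _)
  have hsplitM : (∫ θ in (0:ℝ)..θ₂, F (M * Real.sin θ) * Real.sin θ) +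
      (∫ θ in θ₂..(π/2), F (M * Real.sin θ) * Real.sin θ) =
      ∫ θ in (0:ℝ)..(π/2), F (M * Real.sin θ) * Real.sin θ :=
    intervalIntegral.integral_add_adjacent_intervals
      ((hcι M).intervalIntegrable _ _) ((hcι M).intervalIntegrable _ _)
  have hsplitM2 : (∫ θ in θ₂..θ₁, F (M * Real.sin θ) * Real.sin θ) +
      (∫ θ in θ₁..(π/2), F (M * Real.sin θ) * Real.sin θ) =
      ∫ θ in θ₂..(π/2), F (M * Real.sin θ) * Real.sin θ :=
    intervalIntegral.integral_add_adjacent_intervals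
      ((hcι M).intervalIntegrable _ _) ((hcι M).intervalIntegrable _ _)
  -- N comparison
  have hNρ := N_subst hFc hs₀ hρs₀
  have hNM := N_subst hFc hs₀ hMs₀
  have hwcont : ∀ s : ℝ, s₀ < s → ContinuousOn
      (fun u => F u * (u / (s * Real.sqrt (s^2 - u^2)))) (Set.Icc 0 s₀) := by
    intro s hss
    apply ContinuousOn.mul hFc.continuousOn
    apply ContinuousOn.div continuousOn_id
    · exact (continuous_const.mul ((continuous_const.sub (continuous_pow 2)).sqrt)).continuousOn
    · intro u hu
      have h1 : u < s := lt_of_le_of_lt hu.2 hss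
      have h2 : 0 < s^2 - u^2 := by nlinarith [hu.1]
      have h3 := Real.sqrt_pos.mpr h2
      have : 0 < s := hs₀.trans hss
      positivity
  have hN : (∫ u in (0:ℝ)..s₀, F u * (u / (ρ * Real.sqrt (ρ^2 - u^2)))) <
      ∫ u in (0:ℝ)..s₀, F u * (u / (M * Real.sqrt (M^2 - u^2))) := by
    apply intervalIntegral.integral_lt_integral_of_continuousOn_of_le_of_exists_lt hs₀
      (hwcont ρ hρs₀) (hwcont M hMs₀)
    · intro u hu
      have hFu : F u ≤ 0 := by
        rcases eq_or_lt_of_le hu.2 with h | h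
        · rw [h]; exact le_of_eq hFs₀
        · exact (hneg u ⟨hu.1, h⟩).le
      have hd1 : 0 < ρ * Real.sqrt (ρ^2 - u^2) := by
        have h2 : 0 < ρ^2 - u^2 := by nlinarith [hu.1.le, hu.2]
        have := Real.sqrt_pos.mpr h2
        positivity
      have hd2 : ρ * Real.sqrt (ρ^2 - u^2) ≤ M * Real.sqrt (M^2 - u^2) := by
        have hsq : Real.sqrt (ρ^2 - u^2) ≤ Real.sqrt (M^2 - u^2) :=
          Real.sqrt_le_sqrt (by nlinarith)
        have := Real.sqrt_nonneg (ρ^2 - u^2)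
        nlinarith
      have hw : u / (M * Real.sqrt (M^2 - u^2)) ≤ u / (ρ * Real.sqrt (ρ^2 - u^2)) :=
        div_le_div_of_nonneg_left hu.1.le hd1 hd2
      nlinarith
    · refine ⟨s₀/2, ⟨by positivity, by linarith⟩, ?_⟩
      have hu1 : (0:ℝ) < s₀/2 := by positivity
      have hu2 : s₀/2 < s₀ := by linarith
      have hFu : F (s₀/2) < 0 := hneg _ ⟨hu1, hu2⟩
      have h2ρ : 0 < ρ^2 - (s₀/2)^2 := by nlinarith
      have h2M : 0 < M^2 - (s₀/2)^2 := by nlinarith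
      have hsρ := Real.sqrt_pos.mpr h2ρ
      have hsM := Real.sqrt_pos.mpr h2M
      have hd2 : ρ * Real.sqrt (ρ^2 - (s₀/2)^2) < M * Real.sqrt (M^2 - (s₀/2)^2) := by
        have hsq : Real.sqrt (ρ^2 - (s₀/2)^2) ≤ Real.sqrt (M^2 - (s₀/2)^2) :=
          Real.sqrt_le_sqrt (by nlinarith)
        nlinarith
      have hw : s₀/2 / (M * Real.sqrt (M^2 - (s₀/2)^2)) <
          s₀/2 / (ρ * Real.sqrt (ρ^2 - (s₀/2)^2)) :=
        div_lt_div_of_pos_left hu1 (by positivity) hd2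
      nlinarith
  -- P comparisons
  have hsinmono := Real.strictMonoOn_sin.monotoneOn
  have hP1 : 0 ≤ ∫ θ in θ₂..θ₁, F (M * Real.sin θ) * Real.sin θ := by
    apply intervalIntegral.integral_nonneg hθ₂₁
    intro θ hθ
    have hmem1 : θ₂ ∈ Set.Icc (-(π/2)) (π/2) := ⟨by linarith, hθ₂lt.le⟩
    have hmemθ : θ ∈ Set.Icc (-(π/2)) (π/2) := ⟨by linarith [hθ.1], by linarith [hθ.2, hθ₁lt]⟩
    have hsin : Real.sin θ₂ ≤ Real.sin θ := hsinmono hmem1 hmemθ hθ.1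
    have hsinnn : 0 ≤ Real.sin θ := by rw [hsinθ₂] at hsin; linarith [hr1M]
    have harg : s₀ ≤ M * Real.sin θ := by
      rw [hsinθ₂] at hsin
      calc s₀ = M * (s₀/M) := by field_simp
        _ ≤ M * Real.sin θ := by nlinarith
    have hFnn : 0 ≤ F (M * Real.sin θ) := by
      rcases eq_or_lt_of_le harg with h | h
      · rw [← h]; exact hFs₀.symm.le
      · exact (hpos _ h).le
    positivity
  have hP2 : (∫ θ in θ₁..(π/2), F (ρ * Real.sin θ) * Real.sin θ) ≤
      ∫ θ in θ₁..(π/2), F (M * Real.sin θ) * Real.sin θ := by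
    apply intervalIntegral.integral_mono_on hθ₁lt.le
      ((hcι ρ).intervalIntegrable _ _) ((hcι M).intervalIntegrable _ _)
    intro θ hθ
    have hmem1 : θ₁ ∈ Set.Icc (-(π/2)) (π/2) := ⟨by linarith, hθ₁lt.le⟩
    have hmemθ : θ ∈ Set.Icc (-(π/2)) (π/2) := ⟨by linarith [hθ.1], hθ.2⟩
    have hsin : Real.sin θ₁ ≤ Real.sin θ := hsinmono hmem1 hmemθ hθ.1
    have hsinpos : 0 < Real.sin θ := by rw [hsinθ₁] at hsin; linarith [hr1ρ]
    have harg : s₀ ≤ ρ * Real.sin θ := by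
      rw [hsinθ₁] at hsin
      calc s₀ = ρ * (s₀/ρ) := by field_simp
        _ ≤ ρ * Real.sin θ := by nlinarith
    have hargM : ρ * Real.sin θ < M * Real.sin θ := by nlinarith
    have hFle : F (ρ * Real.sin θ) ≤ F (M * Real.sin θ) := by
      rcases eq_or_lt_of_le harg with h | h
      · rw [← h]
        refine le_trans (le_of_eq hFs₀) (hpos _ ?_).le
        rw [← h] at hargM; exact hargM
      · exact hmono h (Set.mem_Ioi.mpr (h.trans hargM)) hargM.le
    exact mul_le_mul_of_nonneg_right hFle hsinpos.le
  -- conclude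
  have hGM : 0 < ∫ θ in (0:ℝ)..(π/2), F (M * Real.sin θ) * Real.sin θ := by
    rw [← hsplitM, ← hsplitM2]
    rw [← hsplitρ] at hGρ
    rw [hNρ] at hGρ
    rw [hNM]
    linarith
  rw [hkapG M hM]
  positivity



lemma inner_fbar_eq {f : ℝ → ℝ} (hf : Continuous f) (hfe : ∀ s, f (-s) = f s)
    (v : E2) (hv : v ≠ 0) :
    ⟪v, fbar f v⟫ = kappa f ‖v‖ * ‖v‖ := by
  obtain ⟨θ, h0, h1⟩ := polar v hv
  have hrpos : 0 < ‖v‖ := norm_pos_iff.mpr hv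
  set r := ‖v‖ with hrdef
  have hk : Continuous fun φ => f (v 0 * Real.cos φ + v 1 * Real.sin φ) *
      (-(v 0) * Real.sin φ + v 1 * Real.cos φ) := by fun_prop
  rw [fbar, real_inner_smul_right, inner_integral_vec2 v _ hk]
  have hcong : ∀ φ ∈ uIcc (0:ℝ) (2*π),
      f (v 0 * Real.cos φ + v 1 * Real.sin φ) * (-(v 0) * Real.sin φ + v 1 * Real.cos φ) *
        (-(v 0) * Real.sin φ + v 1 * Real.cos φ) = Psi f r (φ - θ) := by
    intro φ _
    rw [h0, h1, Psi]
    rw [Real.cos_sub, Real.sin_sub]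
    ring
  rw [intervalIntegral.integral_congr hcong, step_shift hf θ, step_half hf hfe,
    step_subst hf hrpos, step_even hf hfe]
  have hmul : (∫ u in (0:ℝ)..r, f u * (Real.sqrt (1 - u ^ 2 / r ^ 2) * r)) =
      (∫ u in (0:ℝ)..r, f u * Real.sqrt (1 - u ^ 2 / r ^ 2)) * r := by
    rw [← intervalIntegral.integral_mul_const]
    exact intervalIntegral.integral_congr fun u _ => by ring
  rw [hmul, kappa]
  have hπ := Real.pi_pos
  field_simp

/-- if `M = maxᵢ |ηᵢ| > ρ` then for every `i` with `|ηᵢ| = M`,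
`⟪ηᵢ, -f̄(ηᵢ) + Σ_{j≠i} γ̄ᵢⱼ(ηⱼ - ηᵢ)⟫ ≤ -κ(M)·M < 0`. -/
theorem lyapunov_decrease (m : ℕ) (hm : 2 ≤ m)
    (f : ℝ → ℝ) (hflip : LocallyLipschitz f) (hfe : ∀ s : ℝ, f (-s) = f s)
    (s₀ : ℝ) (hF : CondL2 (fun s => ∫ σ in (0:ℝ)..s, f σ) s₀)
    (ρ : ℝ) (hρ : 0 < ρ) (hκρ : kappa f ρ = 0)
    (γ : Fin m → Fin m → ℝ → ℝ)
    (hγlip : ∀ i j, i ≠ j → LocallyLipschitz (γ i j))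
    (hG1 : ∀ i j, i ≠ j → γ i j 0 = 0 ∧ ∀ s : ℝ, 0 ≤ s * γ i j s)
    (hG2 : ∀ i j, i ≠ j →
      (∀ s : ℝ, γ i j s = 0) ∨ ∃ α, ClassK α ∧ ∀ s : ℝ, α |s| ≤ |γ i j s|)
    (η : Fin m → E2) (M : ℝ) (hub : ∀ i, ‖η i‖ ≤ M) (hex : ∃ i, ‖η i‖ = M) (hMρ : ρ < M) :
    ∀ i, ‖η i‖ = M →
      ⟪η i, -fbar f (η i) + ∑ j ∈ Finset.univ.erase i, gbar (γ i j) (η j - η i)⟫ ≤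
          -(kappa f M * M) ∧
      ⟪η i, -fbar f (η i) + ∑ j ∈ Finset.univ.erase i, gbar (γ i j) (η j - η i)⟫ < 0 := by
  intro i hi
  have hfc : Continuous f := hflip.continuous
  obtain ⟨hs₀, hFs₀, hneg, hpos, hmono, -⟩ := hF
  have hκM : 0 < kappa f M :=
    kappa_pos_of_gt hfc (fun t => rfl) hs₀ hFs₀ hneg hpos hmono hρ hκρ hMρ
  have hMpos : 0 < M := hρ.trans hMρ
  have hvne : η i ≠ 0 := by
    intro h
    rw [h, norm_zero] at hi
    exact absurd hi.symm (ne_of_gt hMpos)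
  have hfb : ⟪η i, fbar f (η i)⟫ = kappa f M * M := by
    rw [inner_fbar_eq hfc hfe (η i) hvne, hi]
  have hsum : ⟪η i, ∑ j ∈ Finset.univ.erase i, gbar (γ i j) (η j - η i)⟫ ≤ 0 := by
    rw [inner_sum]
    apply Finset.sum_nonpos
    intro j hj
    have hji : j ≠ i := (Finset.mem_erase.mp hj).1
    have hij : i ≠ j := hji.symm
    have hγc : Continuous (γ i j) := (hγlip i j hij).continuous
    obtain ⟨hγ0, hγsign⟩ := hG1 i j hij
    apply inner_gbar_nonpos (η i) (η j - η i) hγc hγ0 hγsign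
    rw [inner_sub_right]
    have h1 : ⟪η i, η j⟫ ≤ ‖η i‖ * ‖η j‖ := real_inner_le_norm _ _
    have h2 : ⟪η i, η i⟫ = ‖η i‖ ^ 2 := real_inner_self_eq_norm_sq _
    have h3 : ‖η j‖ ≤ M := hub j
    rw [h2, hi]
    nlinarith [norm_nonneg (η i), hi]
  have hmain : ⟪η i, -fbar f (η i) + ∑ j ∈ Finset.univ.erase i,
      gbar (γ i j) (η j - η i)⟫ ≤ -(kappa f M * M) := by
    rw [inner_add_right, inner_neg_right, hfb]
    linarith
  refine ⟨hmain, lt_of_le_of_lt hmain ?_⟩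
  have : 0 < kappa f M * M := mul_pos hκM hMpos
  linarith
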